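/- Let Γ be a connected simple graph of odd order in which every vertex has degree 4, and let X ≤ Aut(Γ) be a vertex-transitive subgroup of odd order. Then X acts regularly on the vertex set of Γ. -/

import Mathlib

/-- A finset invariant under a fixed-point-free involution has even cardinality. -/
lemma even_card_of_fpf_involution {α : Type*} [DecidableEq α] (f : α → α)
    (h2 : ∀ x, f (f x) = x) (h3 : ∀ x, f x ≠ x) :
    ∀ s : Finset α, (∀ x ∈ s, f x ∈ s) → Even s.card := by
  intro s
  induction s using Finset.strongInduction with
  | _ s ih =>
    intro hs
    rcases s.eq_empty_or_nonempty with rfl | ⟨x, hx⟩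
    · simp
    · have hfx : f x ∈ s := hs x hx
      have hxfx : f x ≠ x := h3 x
      set t := (s.erase x).erase (f x) with ht
      have htss : t ⊂ s :=
        Finset.ssubset_of_subset_of_ssubset (Finset.erase_subset _ _) (Finset.erase_ssubset hx)
      have hfxe : f x ∈ s.erase x := Finset.mem_erase.mpr ⟨hxfx, hfx⟩
      have hc1 : (s.erase x).card = s.card - 1 := Finset.card_erase_of_mem hx
      have hc2 : t.card = (s.erase x).card - 1 := Finset.card_erase_of_mem hfxe
      have hpos : 1 ≤ s.card := Finset.card_pos.mpr ⟨x, hx⟩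
      have hpos2 : 1 ≤ (s.erase x).card := Finset.card_pos.mpr ⟨f x, hfxe⟩
      have hcard : s.card = t.card + 2 := by omega
      have htinv : ∀ y ∈ t, f y ∈ t := by
        intro y hy
        rw [ht, Finset.mem_erase, Finset.mem_erase] at hy ⊢
        obtain ⟨hy1, hy2, hy3⟩ := hy
        refine ⟨?_, ?_, hs y hy3⟩
        · intro h; apply hy2; rw [← h2 y, h]; exact h2 x
        · intro h; apply hy1; rw [← h2 y, h]
      obtain ⟨k, hk⟩ := ih t htss htinv
      exact ⟨k + 1, by omega⟩

theorem odd_order_vertex_transitive_on_tetravalent_is_regular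
    {V : Type*} [Fintype V] (Γ : SimpleGraph V) [DecidableRel Γ.Adj]
    (hconn : Γ.Connected)
    (hodd : Odd (Fintype.card V))
    (hdeg : ∀ v : V, Γ.degree v = 4)
    (X : Subgroup (Equiv.Perm V))
    (haut : ∀ g ∈ X, ∀ u v : V, Γ.Adj (g u) (g v) ↔ Γ.Adj u v)
    (htrans : ∀ u v : V, ∃ g ∈ X, g u = v)
    (hXodd : Odd (Nat.card X)) :
    ∀ g ∈ X, ∀ v : V, g v = v → g = 1 := by
  classical
  -- the stabilizer of a vertex inside X
  set S : V → Subgroup (Equiv.Perm V) :=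
    fun v => X ⊓ MulAction.stabilizer (Equiv.Perm V) v with hSdef
  have hmemS : ∀ (v : V) (g : Equiv.Perm V), g ∈ S v ↔ g ∈ X ∧ g v = v := by
    intro v g
    simp [hSdef, MulAction.mem_stabilizer_iff, Equiv.Perm.smul_def]
  -- stabilizers all have the same cardinality
  have hScard : ∀ u v : V, Nat.card (S u) = Nat.card (S v) := by
    intro u v
    obtain ⟨k, hk, hku⟩ := htrans u v
    apply Nat.card_congr
    have hmk : ∀ g : Equiv.Perm V, g ∈ S u → k * g * k⁻¹ ∈ S v := by
      intro g hg
      obtain ⟨hgX, hgu⟩ := (hmemS u g).mp hg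
      refine (hmemS v _).mpr ⟨mul_mem (mul_mem hk hgX) (inv_mem hk), ?_⟩
      have : k⁻¹ v = u := by rw [← hku]; exact k.symm_apply_apply u
      simp [Equiv.Perm.mul_apply, this, hgu, hku]
    have hmk' : ∀ g : Equiv.Perm V, g ∈ S v → k⁻¹ * g * k ∈ S u := by
      intro g hg
      obtain ⟨hgX, hgv⟩ := (hmemS v g).mp hg
      refine (hmemS u _).mpr ⟨mul_mem (mul_mem (inv_mem hk) hgX) hk, ?_⟩
      have hkv : k⁻¹ v = u := by rw [← hku]; exact k.symm_apply_apply u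
      simp [Equiv.Perm.mul_apply, hku, hgv, hkv]
    refine ⟨fun g => ⟨k * g * k⁻¹, hmk g g.2⟩, fun g => ⟨k⁻¹ * g * k, hmk' g g.2⟩, ?_, ?_⟩
    · intro g; ext : 1; simp [mul_assoc]
    · intro g; ext : 1; simp [← mul_assoc]
  -- stabilizers have odd cardinality
  have hSodd : ∀ v : V, Odd (Nat.card (S v)) := by
    intro v
    have hdvd : Nat.card (S v) ∣ Nat.card X := Subgroup.card_dvd_of_le inf_le_left
    rcases Nat.even_or_odd (Nat.card (S v)) with he | ho
    · exfalso
      have : (2 : ℕ) ∣ Nat.card X := dvd_trans he.two_dvd hdvd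
      exact (Nat.not_even_iff_odd.mpr hXodd) (even_iff_two_dvd.mpr this)
    · exact ho
  -- the set of neighbors of v fixed pointwise by S v
  set F : V → Finset V :=
    fun v => (Γ.neighborFinset v).filter (fun u => ∀ g : Equiv.Perm V, g ∈ S v → g u = u)
    with hFdef
  have hmemF : ∀ v u : V, u ∈ F v ↔ Γ.Adj v u ∧ ∀ g : Equiv.Perm V, g ∈ S v → g u = u := by
    intro v u
    simp [hFdef, SimpleGraph.mem_neighborFinset]
  -- F is equivariant
  have hFconj : ∀ k : Equiv.Perm V, k ∈ X → ∀ v u : V, u ∈ F v ↔ k u ∈ F (k v) := by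
    intro k hk v u
    rw [hmemF, hmemF]
    constructor
    · rintro ⟨hadj, hfix⟩
      refine ⟨(haut k hk v u).mpr hadj, ?_⟩
      intro g hg
      obtain ⟨hgX, hgkv⟩ := (hmemS (k v) g).mp hg
      have hmem : k⁻¹ * g * k ∈ S v := by
        refine (hmemS v _).mpr ⟨mul_mem (mul_mem (inv_mem hk) hgX) hk, ?_⟩
        simp [Equiv.Perm.mul_apply, hgkv]
      have := hfix _ hmem
      simp only [Equiv.Perm.mul_apply] at this
      have := congrArg k this
      simpa using this
    · rintro ⟨hadj, hfix⟩
      refine ⟨(haut k hk v u).mp hadj, ?_⟩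
      intro g hg
      obtain ⟨hgX, hgv⟩ := (hmemS v g).mp hg
      have hmem : k * g * k⁻¹ ∈ S (k v) := by
        refine (hmemS (k v) _).mpr ⟨mul_mem (mul_mem hk hgX) (inv_mem hk), ?_⟩
        simp [Equiv.Perm.mul_apply, hgv]
      have := hfix _ hmem
      simp only [Equiv.Perm.mul_apply] at this
      have h2 : k (g u) = k u := by simpa using this
      exact k.injective h2
  -- hence F has constant cardinality
  have hFcc : ∀ u v : V, (F u).card = (F v).card := by
    intro u v
    obtain ⟨k, hk, hku⟩ := htrans u v
    have himg : (F u).image k = F (k u) := by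
      ext z
      simp only [Finset.mem_image]
      constructor
      · rintro ⟨w, hw, rfl⟩; exact (hFconj k hk u w).mp hw
      · intro hz
        refine ⟨k⁻¹ z, ?_, by simp⟩
        have := (hFconj k hk u (k⁻¹ z)).mpr
        rw [show k (k⁻¹ z) = z from k.apply_symm_apply z] at this
        exact this hz
    calc (F u).card = ((F u).image k).card :=
          (Finset.card_image_of_injective _ k.injective).symm
      _ = (F (k u)).card := by rw [himg]
      _ = (F v).card := by rw [hku]
  -- each F v has cardinality 1 or 4
  have hF14 : ∀ v : V, (F v).card = 1 ∨ (F v).card = 4 := by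
    intro v
    have hNcard : (Γ.neighborFinset v).card = 4 := by
      rw [SimpleGraph.card_neighborFinset_eq_degree]; exact hdeg v
    have hFsub : F v ⊆ Γ.neighborFinset v := Finset.filter_subset _ _
    set C := Γ.neighborFinset v \ F v with hC
    have hCcard : C.card = 4 - (F v).card := by
      rw [hC, Finset.card_sdiff_of_subset hFsub, hNcard]
    have hFle : (F v).card ≤ 4 := hNcard ▸ Finset.card_le_card hFsub
    -- orbits inside C have cardinality at least 3
    have horb : ∀ x ∈ C, ∃ T : Finset V,
        T ⊆ C ∧ 3 ≤ T.card ∧ Odd T.card ∧ (∀ y : V, y ∈ T ↔ y ∈ MulAction.orbit (S v) x) := by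
      intro x hx
      obtain ⟨hxN, hxF⟩ := Finset.mem_sdiff.mp hx
      set O : Set V := MulAction.orbit (S v) x with hO
      refine ⟨O.toFinset, ?_, ?_⟩
      · -- orbit contained in C
        intro y hy
        rw [Set.mem_toFinset] at hy
        obtain ⟨h, hhy⟩ := hy
        have hhy' : (h : Equiv.Perm V) x = y := hhy
        subst hhy'
        obtain ⟨hhX, hhv⟩ := (hmemS v h).mp h.2
        have hxadj : Γ.Adj v x := by simpa using hxN
        have hadj : Γ.Adj v ((h : Equiv.Perm V) x) := by
          have := (haut h hhX v x).mpr hxadj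
          rwa [hhv] at this
        refine Finset.mem_sdiff.mpr ⟨by simpa using hadj, ?_⟩
        intro hmem
        apply hxF
        rw [hmemF] at hmem ⊢
        refine ⟨hxadj, ?_⟩
        intro g hg
        have hconjmem : (h : Equiv.Perm V) * g * (h : Equiv.Perm V)⁻¹ ∈ S v := by
          obtain ⟨hgX, hgv⟩ := (hmemS v g).mp hg
          refine (hmemS v _).mpr ⟨mul_mem (mul_mem hhX hgX) (inv_mem hhX), ?_⟩
          have hinv : (h : Equiv.Perm V)⁻¹ v = v := by
            apply (h : Equiv.Perm V).injective
            simp [hhv]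
          simp [Equiv.Perm.mul_apply, hinv, hgv, hhv]
        have hfix := hmem.2 _ hconjmem
        simp only [Equiv.Perm.mul_apply] at hfix
        apply (h : Equiv.Perm V).injective
        simpa using hfix
      · -- orbit has cardinality ≥ 3 and odd
        refine ?_
        have hxO : x ∈ O := MulAction.mem_orbit_self x
        have hcd : Nat.card O ∣ Nat.card (S v) := by
          have := MulAction.card_orbit_mul_card_stabilizer_eq_card_group (S v) x
          rw [Nat.card_eq_fintype_card, Nat.card_eq_fintype_card]
          exact ⟨_, this.symm⟩
        have hOodd : Odd (Nat.card O) := by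
          rcases Nat.even_or_odd (Nat.card O) with he | ho
          · exfalso
            exact (Nat.not_even_iff_odd.mpr (hSodd v))
              (even_iff_two_dvd.mpr (dvd_trans he.two_dvd hcd))
          · exact ho
        have hcardeq : O.toFinset.card = Nat.card O := by
          rw [Set.toFinset_card, Nat.card_eq_fintype_card]
        have hne1 : Nat.card O ≠ 1 := by
          intro h1
          apply hxF
          rw [hmemF]
          refine ⟨by simpa using hxN, ?_⟩
          intro g hg
          have h1' : O.ncard = 1 := by rw [← Nat.card_coe_set_eq]; exact h1
          obtain ⟨a, ha⟩ := Set.ncard_eq_one.mp h1'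
          have hax : x = a := by
            have := hxO; rw [ha] at this; simpa using this
          have hgx : (⟨g, hg⟩ : S v) • x ∈ O := MulAction.mem_orbit _ _
          have hgx' : g x ∈ O := hgx
          rw [ha, ← hax, Set.mem_singleton_iff] at hgx'
          exact hgx'
        obtain ⟨m, hm⟩ := hOodd
        refine ⟨by rw [hcardeq]; omega, by rw [hcardeq]; exact ⟨m, hm⟩, fun y => Set.mem_toFinset⟩
    -- now count
    by_cases h4 : (F v).card = 4
    · right; exact h4
    · left
      have hCpos : 0 < C.card := by omega
      obtain ⟨x, hx⟩ := Finset.card_pos.mp hCpos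
      obtain ⟨T, hTsub, hTcard, hTodd, hTorb⟩ := horb x hx
      have hCle : C.card ≤ 4 := by omega
      have hTle : T.card ≤ C.card := Finset.card_le_card hTsub
      -- show C.card = 3
      rcases Nat.lt_or_ge C.card 4 with hlt | hge
      · omega
      · exfalso
        -- C.card = 4, take y outside T
        obtain ⟨m, hmT⟩ := hTodd
        have hT3 : T.card = 3 := by omega
        have hne : ¬ C ⊆ T := by
          intro hsub
          have := Finset.card_le_card hsub
          omega
        obtain ⟨y, hyC, hyT⟩ := Finset.not_subset.mp hne
        obtain ⟨T', hT'sub, hT'card, hT'odd, hT'orb⟩ := horb y hyC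
        have hdisj : Disjoint T T' := by
          rw [Finset.disjoint_left]
          intro z hzT hzT'
          apply hyT
          rw [hTorb] at hzT ⊢
          rw [hT'orb] at hzT'
          obtain ⟨h, hz⟩ := hzT
          obtain ⟨k, hz'⟩ := hzT'
          have hz2 : h • x = z := hz
          have hz2' : k • y = z := hz'
          have hy : (k⁻¹ * h) • x = y := by
            rw [mul_smul, hz2, ← hz2', inv_smul_smul]
          exact ⟨k⁻¹ * h, hy⟩
        have := Finset.card_le_card (Finset.union_subset hTsub hT'sub)
        rw [Finset.card_union_of_disjoint hdisj] at this
        omega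
  intro g hgX v hgv
  have hg : g ∈ S v := (hmemS v g).mpr ⟨hgX, hgv⟩
  rcases hF14 v with h1 | h4
  · -- every vertex has a unique fixed neighbor: gives a fixed-point-free involution
    exfalso
    have h1all : ∀ w, (F w).card = 1 := fun w => (hFcc w v).trans h1
    choose f hf using fun w => Finset.card_eq_one.mp (h1all w)
    have hfmem : ∀ w, f w ∈ F w := fun w => by
      rw [hf w]; exact Finset.mem_singleton_self _
    have hSle : ∀ w, S w ≤ S (f w) := by
      intro w g' hg'
      obtain ⟨hadj, hfix⟩ := (hmemF w (f w)).mp (hfmem w)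
      exact (hmemS (f w) g').mpr ⟨((hmemS w g').mp hg').1, hfix g' hg'⟩
    have hSeq : ∀ w, S w = S (f w) := fun w =>
      Subgroup.eq_of_le_of_card_ge (hSle w) (hScard (f w) w).le
    have hff : ∀ w, f (f w) = w := by
      intro w
      have hwmem : w ∈ F (f w) := by
        rw [hmemF]
        obtain ⟨hadj, _⟩ := (hmemF w (f w)).mp (hfmem w)
        refine ⟨hadj.symm, ?_⟩
        intro g' hg'
        rw [← hSeq w] at hg'
        exact ((hmemS w g').mp hg').2
      rw [hf (f w)] at hwmem
      exact (Finset.mem_singleton.mp hwmem).symm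
    have hfne : ∀ w, f w ≠ w := by
      intro w h
      have hadj := ((hmemF w (f w)).mp (hfmem w)).1
      rw [h] at hadj
      exact Γ.loopless.irrefl w hadj
    have heven : Even (Finset.univ : Finset V).card :=
      even_card_of_fpf_involution f hff hfne Finset.univ (fun x _ => Finset.mem_univ _)
    rw [Finset.card_univ] at heven
    exact (Nat.not_odd_iff_even.mpr heven) hodd
  · -- every stabilizer fixes all neighbors: propagate along the connected graph
    have h4all : ∀ w, F w = Γ.neighborFinset w := by
      intro w
      apply Finset.eq_of_subset_of_card_le (Finset.filter_subset _ _)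
      have hFw : (F w).card = 4 := (hFcc w v).trans h4
      rw [hFw, SimpleGraph.card_neighborFinset_eq_degree, hdeg w]
    have hstep : ∀ a b, Γ.Adj a b → S a = S b := by
      intro a b hab
      have hbF : b ∈ F a := by rw [h4all a]; simpa using hab
      have hle : S a ≤ S b := by
        intro g' hg'
        obtain ⟨_, hfix⟩ := (hmemF a b).mp hbF
        exact (hmemS b g').mpr ⟨((hmemS a g').mp hg').1, hfix g' hg'⟩
      exact Subgroup.eq_of_le_of_card_ge hle (hScard b a).le
    have hwalk : ∀ (a b : V), Γ.Walk a b → S a = S b := by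
      intro a b p
      induction p with
      | nil => rfl
      | cons h p ih => exact (hstep _ _ h).trans ih
    have hall : ∀ w, g w = w := by
      intro w
      obtain ⟨p⟩ := hconn v w
      have hgw : g ∈ S w := (hwalk v w p) ▸ hg
      exact ((hmemS w g).mp hgw).2
    exact Equiv.ext hall
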